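/- arXiv:1101.6075 — 6 statements merged into one kernel-verified Lean document; each statement's English description precedes it below -/
import Mathlib

section
/- For nets of functions f_ε, g_ε : ℝ → ℝ, the induced internal maps [f_ε] and [g_ε] on *ℝ (defined by [f_ε]([x_ε]) = [f_ε(x_ε)]) are equal if and only if f_ε = g_ε for all sufficiently small ε. -/
open Filter Set

/-- The filter of "small ε" : neighborhoods of 0 within (0,1). -/
noncomputable def L : Filter ℝ := nhdsWithin 0 (Set.Ioo 0 1)

/-- The generalized reals: germs of nets (0,1) → ℝ at ε → 0⁺. -/
abbrev SR : Type := Filter.Germ L ℝ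

/-- The internal map [f_ε] induced by a net of functions, acting representative-wise. -/
noncomputable def internalMap (f : ℝ → ℝ → ℝ) (x : SR) : SR :=
  Filter.Germ.map₂ (fun (g : ℝ → ℝ) (y : ℝ) => g y) (↑f : Filter.Germ L (ℝ → ℝ)) x

instance : L.NeBot := by
  rw [L]
  exact left_nhdsWithin_Ioo_neBot (by norm_num)

theorem internalMap_eq_iff (f g : ℝ → ℝ → ℝ) :
    internalMap f = internalMap g ↔ ∀ᶠ ε in L, f ε = g ε := by
  constructor
  · intro h
    classical
    set x : ℝ → ℝ := fun ε => if hy : ∃ y, f ε y ≠ g ε y then hy.choose else 0 with hx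
    have h2 := congrFun h (↑x)
    simp only [internalMap, Filter.Germ.map₂_coe, Filter.Germ.coe_eq] at h2
    filter_upwards [h2] with ε hε
    funext y
    by_contra hne
    have hy : ∃ y, f ε y ≠ g ε y := ⟨y, hne⟩
    have : x ε = hy.choose := by simp [hx, hy]
    exact hy.choose_spec (by rwa [this] at hε)
  · intro h
    funext x
    induction x using Filter.Germ.inductionOn with
    | _ a =>
      simp only [internalMap, Filter.Germ.map₂_coe, Filter.Germ.coe_eq]
      filter_upwards [h] with ε hε
      simp [hε]
end

section
/- Idempotent decomposition of the order: for all x, y ∈ *ℝ there exists e ∈ *ℝ with e² = e, x·e ≤ y·e, and y·(1−e) ≤ x·(1−e). -/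
open Filter Set

theorem idempotent_order_decomposition (x y : SR) :
    ∃ e : SR, e ^ 2 = e ∧ x * e ≤ y * e ∧ y * (1 - e) ≤ x * (1 - e) := by
  induction x using Filter.Germ.inductionOn with
  | h f =>
  induction y using Filter.Germ.inductionOn with
  | h g =>
  refine ⟨(↑(fun t => if f t ≤ g t then (1:ℝ) else 0) : SR), ?_, ?_, ?_⟩
  · rw [← Filter.Germ.coe_pow]
    apply Filter.Germ.coe_eq.mpr
    filter_upwards with t
    by_cases h : f t ≤ g t <;> simp [h]
  · rw [← Filter.Germ.coe_mul, ← Filter.Germ.coe_mul, Filter.Germ.coe_le]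
    filter_upwards with t
    by_cases h : f t ≤ g t <;> simp [h]
  · rw [show ((1:SR) - _) = (↑(fun t => 1 - (if f t ≤ g t then (1:ℝ) else 0)) : SR) by
      rw [← Filter.Germ.coe_one, ← Filter.Germ.coe_sub]; rfl]
    rw [← Filter.Germ.coe_mul, ← Filter.Germ.coe_mul, Filter.Germ.coe_le]
    filter_upwards with t
    by_cases h : f t ≤ g t <;> simp [h]
    exact (not_le.mp h).le
end

section
/- Countable saturation: if (B_n) is a sequence of internal subsets of *ℝ with the finite intersection property (every finite subfamily has nonempty intersection), then the intersection of all B_n is nonempty. -/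
open Filter Set

/-- The internal set [A_ε] associated to a net of sets. -/
def internalSet (A : ℝ → Set ℝ) : Set SR :=
  {x : SR | ∃ a : ℝ → ℝ, (↑a : SR) = x ∧ ∀ᶠ ε in L, a ε ∈ A ε}

/-- A set of generalized reals is internal if it is of the form [A_ε]. -/
def IsInternal (S : Set SR) : Prop :=
  ∃ A : ℝ → Set ℝ, (∀ ε, (A ε).Nonempty) ∧ S = internalSet A

lemma Ioo_mem_L (k : ℕ) : {ε : ℝ | ε ∈ Set.Ioo (0:ℝ) (1/(k+1))} ∈ L := by
  rw [L, mem_nhdsWithin]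
  refine ⟨Set.Ioo (-(1/(k+1))) (1/(k+1)), isOpen_Ioo, ?_, ?_⟩
  · constructor
    · simp; positivity
    · positivity
  · rintro ε ⟨⟨h1, h2⟩, h3, h4⟩
    exact ⟨h3, h2⟩

theorem countable_saturation (B : ℕ → Set SR)
    (hint : ∀ n, IsInternal (B n))
    (hFIP : ∀ F : Finset ℕ, (⋂ n ∈ F, B n).Nonempty) :
    (⋂ n, B n).Nonempty := by
  choose A hA hBA using hint
  have hx : ∀ k : ℕ, ∃ a : ℝ → ℝ, ∀ n ≤ k, ∀ᶠ ε in L, a ε ∈ A n ε := by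
    intro k
    obtain ⟨x, hxmem⟩ := hFIP (Finset.range (k+1))
    obtain ⟨c, hc⟩ := Quotient.exists_rep x
    refine ⟨c, fun n hn => ?_⟩
    have hxn : x ∈ B n := Set.mem_iInter₂.mp hxmem n (Finset.mem_range.mpr (Nat.lt_succ_of_le hn))
    rw [hBA n] at hxn
    obtain ⟨d, hd, hdev⟩ := hxn
    have hcd : (↑c : SR) = ↑d := by
      have : (↑c : SR) = x := hc
      rw [this, hd]
    have hac : ∀ᶠ ε in L, c ε = d ε := Filter.Germ.coe_eq.mp hcd
    filter_upwards [hac, hdev] with ε h1 h2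
    rw [h1]; exact h2
  choose a ha using hx
  -- the sets s k
  set s : ℕ → Set ℝ := fun k => {ε | (∀ n ≤ k, a k ε ∈ A n ε) ∧ ε ∈ Set.Ioo (0:ℝ) (1/(k+1))} with hs
  have hsL : ∀ k, s k ∈ L := by
    intro k
    have h1 : ∀ᶠ ε in L, ∀ n ≤ k, a k ε ∈ A n ε := by
      have h0 := (Filter.eventually_all_finite (Set.finite_Iic k)).mpr
        (fun n hn => ha k n (Set.mem_Iic.mp hn))
      exact h0.mono (fun ε h n hn => h n (Set.mem_Iic.mpr hn))
    filter_upwards [h1, Ioo_mem_L k] with ε he1 he2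
    exact ⟨he1, he2⟩
  set u : ℕ → Set ℝ := fun k => ⋂ j ∈ Finset.range (k+1), s j with hu
  have huL : ∀ k, u k ∈ L := fun k =>
    (Filter.biInter_finset_mem _).mpr (fun j _ => hsL j)
  have humono : ∀ j k, j ≤ k → u k ⊆ u j := by
    intro j k hjk ε hε
    simp only [hu, Set.mem_iInter, Finset.mem_range] at hε ⊢
    exact fun i hi => hε i (lt_of_lt_of_le hi (Nat.succ_le_succ hjk))
  have husub : ∀ k, u k ⊆ s k := by
    intro k ε hε
    simp only [hu, Set.mem_iInter, Finset.mem_range] at hε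
    exact hε k (Nat.lt_succ_self k)
  have hexit : ∀ ε : ℝ, ∃ k, ε ∉ u k := by
    intro ε
    rcases le_or_gt ε 0 with h | h
    · exact ⟨0, fun hc => absurd (husub 0 hc).2.1 (not_lt.mpr h)⟩
    · obtain ⟨k, hk⟩ := exists_nat_gt (1/ε)
      refine ⟨k, fun hc => ?_⟩
      have h2 := (husub k hc).2.2
      have : (1:ℝ)/ε < k + 1 := lt_of_lt_of_le hk (by linarith)
      have : (1:ℝ)/(k+1) < ε := by
        rw [div_lt_iff₀ (by positivity)] at this ⊢
        nlinarith
      linarith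
  classical
  set N : ℝ → ℕ := fun ε => Nat.find (hexit ε) with hN
  set b : ℝ → ℝ := fun ε => if ε ∈ u 0 then a (N ε - 1) ε else 0 with hb
  refine ⟨(↑b : SR), Set.mem_iInter.mpr fun n => ?_⟩
  rw [hBA n]
  refine ⟨b, rfl, ?_⟩
  filter_upwards [huL n] with ε hε
  have h0 : ε ∈ u 0 := humono 0 n (Nat.zero_le n) hε
  have hNgt : n < N ε := by
    by_contra hcon
    push_neg at hcon
    exact Nat.find_spec (hexit ε) (humono (N ε) n hcon hε)
  set m := N ε - 1 with hm
  have hmlt : m < N ε := Nat.sub_lt (lt_of_le_of_lt (Nat.zero_le n) hNgt) one_pos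
  have hεm : ε ∈ u m := by
    by_contra hc
    exact absurd (Nat.find_le hc) (not_le.mpr hmlt)
  have hnm : n ≤ m := Nat.le_sub_one_of_lt hNgt
  have : b ε = a m ε := by rw [hb]; simp [h0]; rfl
  rw [this]
  exact ((husub m) hεm).1 n hnm
end

section
/- An element a ∈ *ℝ is finite (i.e., |a| ≤ N for some standard N ∈ ℕ) provided that |a| ≤ m for every infinitely large m ∈ *ℕ (where m ∈ *ℕ is infinitely large means m ≥ n for every standard n ∈ ℕ). -/
open Filter Set

/-- *ℕ ⊆ *ℝ : germs of natural-number-valued nets. -/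
def sterN : Set SR :=
  {x : SR | ∃ a : ℝ → ℕ, (↑(fun ε => (a ε : ℝ)) : SR) = x}

/-- m is infinitely large if it dominates every standard natural number. -/
def InfinitelyLarge (m : SR) : Prop := ∀ n : ℕ, (n : SR) ≤ m

private noncomputable def seqAux (c : ℕ → ℝ → ℝ) : ℕ → ℝ
  | 0 => c 1 1
  | (k+1) => c (k+2) (min (seqAux c k) (1/(k+2)))

theorem finite_of_le_all_infinite (a : SR)
    (h : ∀ m ∈ sterN, InfinitelyLarge m → |a| ≤ m) :
    ∃ N : ℕ, |a| ≤ (N : SR) := by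
  classical
  obtain ⟨f, rfl⟩ : ∃ f : ℝ → ℝ, ((f : ℝ → ℝ) : SR) = a := Quotient.exists_rep a
  by_contra hN
  push_neg at hN
  have key : ∀ N : ℕ, ∀ δ : ℝ, ∃ x, 0 < x ∧ (0 < δ → x < δ) ∧ (N:ℝ) < |f x| := by
    intro N δ
    have hco : ¬ ((fun x => |f x| : ℝ → ℝ) : SR) ≤ ((fun _ => (N:ℝ) : ℝ → ℝ) : SR) := hN N
    rw [Filter.Germ.coe_le, Filter.EventuallyLE, Filter.not_eventually] at hco
    have hf : ∃ᶠ x in L, (N:ℝ) < |f x| := by simpa using hco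
    by_cases hδ : 0 < δ
    · have hU : Ioo 0 1 ∩ Ioo (-δ) δ ∈ L :=
        inter_mem_nhdsWithin _ (Ioo_mem_nhds (neg_lt_zero.mpr hδ) hδ)
      obtain ⟨x, hxU, hx⟩ := Filter.frequently_iff.mp hf hU
      exact ⟨x, hxU.1.1, fun _ => hxU.2.2, hx⟩
    · have hU : Ioo 0 1 ∩ Ioo (-(1:ℝ)) 1 ∈ L :=
        inter_mem_nhdsWithin _ (Ioo_mem_nhds (by norm_num) one_pos)
      obtain ⟨x, hxU, hx⟩ := Filter.frequently_iff.mp hf hU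
      exact ⟨x, hxU.1.1, fun h0 => absurd h0 hδ, hx⟩
  choose c hc1 hc2 hc3 using key
  set ε : ℕ → ℝ := seqAux c with hε
  have hpos : ∀ k : ℕ, 0 < ε k := by
    intro k; cases k with
    | zero => exact hc1 1 1
    | succ j => exact hc1 _ _
  have hlt : ∀ k : ℕ, ε k < 1/((k:ℝ)+1) := by
    intro k; cases k with
    | zero => rw [show ε 0 = c 1 1 from rfl]; simpa using hc2 1 1 one_pos
    | succ j =>
      have hmin : 0 < min (ε j) (1/((j:ℝ)+2)) := lt_min (hpos j) (by positivity)
      have h2 : ε (j+1) < min (ε j) (1/((j:ℝ)+2)) := by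
        have := hc2 (j+2) (min (ε j) (1/((j:ℕ)+2:ℝ)))
        push_cast at this ⊢
        exact this (by linarith [hmin])
      calc ε (j+1) < min (ε j) (1/((j:ℝ)+2)) := h2
        _ ≤ 1/((j:ℝ)+2) := min_le_right _ _
        _ = 1/(((j+1:ℕ):ℝ)+1) := by push_cast; ring_nf
  have hdec : ∀ k : ℕ, ε (k+1) < ε k := by
    intro j
    have hmin : 0 < min (ε j) (1/((j:ℕ)+2:ℝ)) := lt_min (hpos j) (by positivity)
    exact lt_of_lt_of_le (hc2 (j+2) _ hmin) (min_le_left _ _)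
  have hanti : StrictAnti ε := strictAnti_nat_of_succ_lt hdec
  have hbig : ∀ k : ℕ, ((k:ℝ)+1) < |f (ε k)| := by
    intro k; cases k with
    | zero => rw [show ε 0 = c 1 1 from rfl]; simpa using hc3 1 1
    | succ j =>
      have e : ε (j+1) = c (j+2) (min (ε j) (1/((j:ℕ)+2:ℝ))) := rfl
      rw [e]
      have := hc3 (j+2) (min (ε j) (1/((j:ℕ)+2:ℝ)))
      push_cast at this ⊢; linarith
  have hex : ∀ x : ℝ, 0 < x → ∃ k, ε k < x := by
    intro x hx
    obtain ⟨n, hn⟩ := exists_nat_one_div_lt hx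
    exact ⟨n, lt_trans (hlt n) hn⟩
  set g : ℝ → ℕ := fun x => if h : ∃ k, ε k < x then Nat.find h else 0 with hg
  set m : SR := ((fun x => (g x : ℝ) : ℝ → ℝ) : SR) with hm
  have hmem : m ∈ sterN := ⟨g, rfl⟩
  have hlarge : InfinitelyLarge m := by
    intro n
    show ((fun _ : ℝ => (n:ℝ) : ℝ → ℝ) : SR) ≤ _
    rw [Filter.Germ.coe_le]
    have hball : Ioo (-(ε n)) (ε n) ∈ nhds (0:ℝ) :=
      Ioo_mem_nhds (neg_lt_zero.mpr (hpos n)) (hpos n)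
    have hL : Ioo 0 1 ∩ Ioo (-(ε n)) (ε n) ∈ L := inter_mem_nhdsWithin _ hball
    filter_upwards [hL] with x hx
    have hx0 : 0 < x := hx.1.1
    have hxn : x < ε n := hx.2.2
    have hfind : ∃ k, ε k < x := hex x hx0
    have hlt' : n < Nat.find hfind := by
      rw [Nat.lt_find_iff]
      intro k hk
      push_neg
      exact le_trans hxn.le (hanti.antitone hk)
    have hgx : g x = Nat.find hfind := by simp [hg, hfind]
    rw [hgx]
    exact_mod_cast hlt'.le
  have hle := h m hmem hlarge
  have hle' : ∀ᶠ x in L, |f x| ≤ (g x : ℝ) := by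
    have : ((fun x => |f x| : ℝ → ℝ) : SR) ≤ ((fun x => (g x : ℝ) : ℝ → ℝ) : SR) := hle
    exact (Filter.Germ.coe_le).mp this
  have htend : Tendsto ε atTop L := by
    rw [L, tendsto_nhdsWithin_iff]
    constructor
    · exact squeeze_zero (fun k => (hpos k).le) (fun k => (hlt k).le)
        tendsto_one_div_add_atTop_nhds_zero_nat
    · exact Eventually.of_forall fun k => ⟨hpos k, lt_of_lt_of_le (hlt k)
        (by rw [div_le_one (by positivity)]; linarith [Nat.cast_nonneg (α := ℝ) k])⟩
  obtain ⟨j, hj⟩ := (htend.eventually hle').exists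
  have hfind : ∃ k, ε k < ε j := ⟨j+1, hdec j⟩
  have hgj : g (ε j) = j + 1 := by
    have hf1 : Nat.find hfind = j + 1 := by
      rw [Nat.find_eq_iff]
      exact ⟨hdec j, fun k hk => not_lt.mpr (hanti.antitone (Nat.lt_succ_iff.mp hk))⟩
    simp [hg, hfind, hf1]
  rw [hgj] at hj
  have := hbig j
  push_cast at hj
  linarith
end

section
/- Rigidity: if f, g : *ℝ → *ℝ are internal maps with f(x) = g(x) for every infinitesimal x, then there exists a standard real r > 0 such that f(x) = g(x) for all x ∈ *ℝ with |x| ≤ r. -/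
open Filter Set

/-- The constant germ. -/
noncomputable def cst (r : ℝ) : SR := ((fun _ => r : ℝ → ℝ) : SR)

/-- x is infinitesimal if |x| ≤ 1/n for every standard n ≥ 1. -/
noncomputable def Infinitesimal (x : SR) : Prop :=
  ∀ n : ℕ, 0 < n → |x| ≤ cst (1 / n)

lemma internalMap_coe (f : ℝ → ℝ → ℝ) (u : ℝ → ℝ) :
    internalMap f (↑u) = ((fun ε => f ε (u ε) : ℝ → ℝ) : SR) := by
  simp [internalMap, Filter.Germ.map₂_coe]

lemma abs_coe (u : ℝ → ℝ) : |((u : SR))| = ((fun ε => |u ε| : ℝ → ℝ) : SR) := rfl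

lemma Ioo_mem_L_s15 {δ : ℝ} (hδ : 0 < δ) : Set.Ioo 0 δ ∈ L := by
  refine mem_nhdsWithin.mpr ⟨Set.Ioo (-δ) δ, isOpen_Ioo, by simp [hδ], ?_⟩
  rintro x ⟨⟨-, h2⟩, h3, -⟩
  exact ⟨h3, h2⟩

theorem rigidity (f g : ℝ → ℝ → ℝ)
    (h : ∀ x : SR, Infinitesimal x → internalMap f x = internalMap g x) :
    ∃ r : ℝ, 0 < r ∧ ∀ x : SR, |x| ≤ cst r → internalMap f x = internalMap g x := by
  by_cases hr : ∃ r : ℝ, 0 < r ∧ ∀ᶠ ε in L, ∀ y : ℝ, |y| ≤ r → f ε y = g ε y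
  · obtain ⟨r, hr0, hE⟩ := hr
    refine ⟨r, hr0, ?_⟩
    intro x hx
    induction x using Filter.Germ.inductionOn with
    | _ u =>
      rw [internalMap_coe, internalMap_coe, Filter.Germ.coe_eq]
      rw [abs_coe] at hx
      have hx' : ∀ᶠ ε in L, |u ε| ≤ r := Filter.Germ.coe_le.mp hx
      filter_upwards [hE, hx'] with ε h1 h2
      exact h1 _ h2
  · exfalso
    classical
    push_neg at hr
    -- key existence
    have key : ∀ (n : ℕ) (e : ℝ), 0 < e → ∃ p : ℝ × ℝ, 0 < p.1 ∧ p.1 < e ∧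
        p.1 < 1 / (n + 1 : ℝ) ∧ |p.2| ≤ 1 / (n + 1 : ℝ) ∧ f p.1 p.2 ≠ g p.1 p.2 := by
      intro n e he
      have hpos : (0 : ℝ) < 1 / (n + 1) := by positivity
      have hfreq : ∃ᶠ ε in L, ∃ y : ℝ, |y| ≤ 1 / (n + 1 : ℝ) ∧ f ε y ≠ g ε y := by
        have := hr (1 / (n + 1 : ℝ)) hpos
        exact this
      have hmem : Set.Ioo 0 (min e (1 / (n + 1 : ℝ))) ∈ L :=
        Ioo_mem_L_s15 (lt_min he hpos)
      obtain ⟨ε, ⟨y, hy1, hy2⟩, hε⟩ :=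
        (hfreq.and_eventually (eventually_of_mem hmem (fun x hx => hx))).exists
      exact ⟨(ε, y), hε.1, lt_of_lt_of_le hε.2 (min_le_left _ _),
        lt_of_lt_of_le hε.2 (min_le_right _ _), hy1, hy2⟩
    choose! F h1 h2 h3 h4 h5 using key
    set s : ℕ → ℝ × ℝ := fun n => Nat.rec (F 0 1) (fun n p => F (n + 1) p.1) n with hs
    have s0 : s 0 = F 0 1 := rfl
    have ssucc : ∀ n, s (n + 1) = F (n + 1) (s n).1 := fun n => rfl
    have pos : ∀ n, 0 < (s n).1 := by
      intro n
      induction n with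
      | zero => exact h1 0 1 one_pos
      | succ n ih => rw [ssucc]; exact h1 (n + 1) _ ih
    have dec : ∀ n, (s (n + 1)).1 < (s n).1 := by
      intro n; rw [ssucc]; exact h2 (n + 1) _ (pos n)
    have lt : ∀ n, (s n).1 < 1 / (n + 1 : ℝ) := by
      intro n
      cases n with
      | zero => exact h3 0 1 one_pos
      | succ n => rw [ssucc]; exact h3 (n + 1) _ (pos n)
    have ybd : ∀ n, |(s n).2| ≤ 1 / (n + 1 : ℝ) := by
      intro n
      cases n with
      | zero => exact h4 0 1 one_pos
      | succ n => rw [ssucc]; exact h4 (n + 1) _ (pos n)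
    have hne : ∀ n, f (s n).1 (s n).2 ≠ g (s n).1 (s n).2 := by
      intro n
      cases n with
      | zero => exact h5 0 1 one_pos
      | succ n => rw [ssucc]; exact h5 (n + 1) _ (pos n)
    have anti : StrictAnti (fun n => (s n).1) := strictAnti_nat_of_succ_lt dec
    have inj : Function.Injective (fun n => (s n).1) := anti.injective
    -- the diagonal net
    set x : ℝ → ℝ := fun t =>
      if h : ∃ n, (s n).1 = t then (s (Nat.find h)).2 else 0 with hxdef
    have x_at : ∀ n, x ((s n).1) = (s n).2 := by
      intro n
      have hex : ∃ m, (s m).1 = (s n).1 := ⟨n, rfl⟩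
      have hx1 : x ((s n).1) = (s (Nat.find hex)).2 := by
        simp only [hxdef]
        exact dif_pos hex
      rw [hx1, inj (Nat.find_spec hex)]
    -- x is infinitesimal
    have hinf : Infinitesimal (↑x : SR) := by
      intro k hk
      rw [cst, abs_coe]
      refine Filter.Germ.coe_le.mpr ?_
      filter_upwards [Filter.eventually_of_mem (Ioo_mem_L_s15 (pos k)) (fun t ht => ht)]
        with t ht
      by_cases hex : ∃ n, (s n).1 = t
      · have hxt : x t = (s (Nat.find hex)).2 := by
          simp only [hxdef]; exact dif_pos hex
        set m := Nat.find hex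
        have hm : (s m).1 = t := Nat.find_spec hex
        have hkm : k < m := by
          have : (s m).1 < (s k).1 := hm ▸ ht.2
          exact anti.lt_iff_gt.mp this
        have : |x t| ≤ 1 / (m + 1 : ℝ) := hxt ▸ ybd m
        refine this.trans ?_
        rw [div_le_div_iff₀ (by positivity) (by exact_mod_cast hk)]
        have : (k : ℝ) ≤ (m : ℝ) + 1 := by
          have := hkm.le
          exact_mod_cast le_trans (Nat.cast_le.mpr this) (by linarith)
        linarith
      · have hxt : x t = 0 := by simp only [hxdef]; exact dif_neg hex
        rw [hxt, abs_zero]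
        positivity
    -- contradiction
    have heq := h (↑x) hinf
    rw [internalMap_coe, internalMap_coe, Filter.Germ.coe_eq] at heq
    have htend : Tendsto (fun n => (s n).1) atTop L := by
      rw [L, tendsto_nhdsWithin_iff]
      constructor
      · exact tendsto_of_tendsto_of_tendsto_of_le_of_le (g := fun _ : ℕ => (0 : ℝ))
          (f := fun n : ℕ => (s n).1) (h := fun n : ℕ => 1 / ((n : ℝ) + 1))
          tendsto_const_nhds tendsto_one_div_add_atTop_nhds_zero_nat
          (fun n => (pos n).le) (fun n => (lt n).le)
      · refine Filter.Eventually.of_forall (fun m => ⟨pos m, ?_⟩)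
        refine (lt m).trans_le ?_
        rw [div_le_one (by positivity)]
        linarith [Nat.cast_nonneg (α := ℝ) m]
    have hfreq2 : ∃ᶠ t in L, f t (x t) ≠ g t (x t) := by
      refine htend.frequently (Filter.Frequently.of_forall ?_)
      intro n
      simpa [x_at n] using hne n
    exact (hfreq2.and_eventually heq).exists.elim (fun t ht => ht.1 ht.2)
end

section
/- Completeness of G_E for countably many seminorms: let E be a real vector space with an increasing sequence of seminorms (p_n). Define moderate (resp. negligible) nets u = (u_ε) ∈ E^(0,1) by: for each n, the net (p_n(u_ε)) is moderate (resp. negligible) in the Colombeau sense. Then every sequence in the quotient G_E = M_E/N_E that is Cauchy with respect to the family of ultrapseudometrics induced by the valuations v_n(u) = sup{ m ∈ ℤ : p_n(u_ε) ≤ ε^m for small ε } converges in G_E. -/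
open Filter Set

/-- A net of elements of E is moderate w.r.t. the seminorms p. -/
def ModerateNet {E : Type*} [AddCommGroup E] [Module ℝ E]
    (p : ℕ → Seminorm ℝ E) (u : ℝ → E) : Prop :=
  ∀ n : ℕ, ∃ N : ℕ, ∀ᶠ ε in L, p n (u ε) ≤ ε⁻¹ ^ N

private lemma L_mem01 : ∀ᶠ ε in L, 0 < ε ∧ ε < 1 := by
  have h : ∀ᶠ ε in nhdsWithin (0:ℝ) (Set.Ioo 0 1), ε ∈ Set.Ioo 0 1 :=
    eventually_mem_nhdsWithin
  exact h.mono fun ε hε => ⟨hε.1, hε.2⟩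

private lemma L_lt {a : ℝ} (ha : 0 < a) : ∀ᶠ ε in L, ε < a :=
  mem_nhdsWithin_of_mem_nhds (Iio_mem_nhds ha)

private lemma L_extract {S : Set ℝ} (hS : S ∈ L) :
    ∃ d : ℝ, 0 < d ∧ d ≤ 1 ∧ ∀ ε : ℝ, 0 < ε → ε < d → ε ∈ S := by
  rw [L, Metric.mem_nhdsWithin_iff] at hS
  obtain ⟨r, hr, h⟩ := hS
  refine ⟨min r 1, by positivity, min_le_right _ _, fun ε hε hεd => ?_⟩
  refine h ⟨?_, hε, lt_of_lt_of_le hεd (min_le_right _ _)⟩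
  rw [Metric.mem_ball, Real.dist_eq, sub_zero, abs_of_pos hε]
  exact lt_of_lt_of_le hεd (min_le_left _ _)

theorem GE_complete {E : Type*} [AddCommGroup E] [Module ℝ E]
    (p : ℕ → Seminorm ℝ E) (hp : Monotone p)
    (u : ℕ → ℝ → E) (hu : ∀ k, ModerateNet p (u k))
    -- Cauchy for the ultrapseudometrics induced by the valuations vₙ
    (hC : ∀ n m : ℕ, ∃ K : ℕ, ∀ k l : ℕ, K ≤ k → K ≤ l →
      ∀ᶠ ε in L, p n (u k ε - u l ε) ≤ ε ^ m) :
    -- there is a moderate net v to which the sequence converges sharply;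
    -- i.e. the class of v in G_E = M_E/N_E is the limit
    ∃ v : ℝ → E, ModerateNet p v ∧
      ∀ n m : ℕ, ∃ K : ℕ, ∀ k : ℕ, K ≤ k →
        ∀ᶠ ε in L, p n (u k ε - v ε) ≤ ε ^ m := by
  classical
  choose K hK using hC
  -- a monotone sequence of indices that works for all pairs of levels up to N
  set c : ℕ → ℕ :=
    fun N => (Finset.range (N+1) ×ˢ Finset.range (N+1)).sup fun q => K q.1 q.2 with hc_def
  have hc_mono : Monotone c := by
    intro a b hab
    apply Finset.sup_mono
    apply Finset.product_subset_product <;> exact Finset.range_subset_range.2 (by omega)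
  have hc : ∀ N i j : ℕ, i ≤ N → j ≤ N → ∀ k l : ℕ, c N ≤ k → c N ≤ l →
      ∀ᶠ ε in L, p i (u k ε - u l ε) ≤ ε ^ j := by
    intro N i j hi hj k l hk hl
    have hKc : K i j ≤ c N := by
      apply Finset.le_sup (f := fun q : ℕ × ℕ => K q.1 q.2) (b := (i, j))
      simp only [Finset.mem_product, Finset.mem_range]
      omega
    exact hK i j k l (le_trans hKc hk) (le_trans hKc hl)
  -- simultaneous eventual bounds for all triples up to N
  have EV : ∀ N : ℕ, ∀ᶠ ε in L, ∀ i j l : ℕ, i ≤ j → j ≤ l → l ≤ N →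
      p i (u (c j) ε - u (c l) ε) ≤ ε ^ j := by
    intro N
    have h : ∀ᶠ ε in L, ∀ q ∈ Finset.range (N+1) ×ˢ Finset.range (N+1) ×ˢ Finset.range (N+1),
        q.1 ≤ q.2.1 → q.2.1 ≤ q.2.2 →
          p q.1 (u (c q.2.1) ε - u (c q.2.2) ε) ≤ ε ^ q.2.1 := by
      rw [Filter.eventually_all_finset]
      rintro ⟨i, j, l⟩ hq
      by_cases hij : i ≤ j
      · by_cases hjl : j ≤ l
        · filter_upwards [hc j i j hij le_rfl (c j) (c l) le_rfl (hc_mono hjl)] with ε hε _ _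
          exact hε
        · filter_upwards with ε _ h'; exact absurd h' hjl
      · filter_upwards with ε h'; exact absurd h' hij
    filter_upwards [h] with ε hε i j l hij hjl hlN
    refine hε (i, j, l) ?_ hij hjl
    simp only [Finset.mem_product, Finset.mem_range]
    omega
  choose d hd0 hd1 hdS using fun N => L_extract (EV N)
  -- a positive antitone sequence δ tending to 0 with δ N ≤ d N
  let δ : ℕ → ℝ := fun N =>
    Nat.rec (min (d 0) 1) (fun n prev => min prev (min (d (n+1)) (((n:ℝ)+2)⁻¹))) N
  have hδ_succ : ∀ n : ℕ, δ (n+1) = min (δ n) (min (d (n+1)) (((n:ℝ)+2)⁻¹)) := fun n => rfl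
  have hδ_zero : δ 0 = min (d 0) 1 := rfl
  have hδpos : ∀ N, 0 < δ N := by
    intro N
    induction N with
    | zero => rw [hδ_zero]; exact lt_min (hd0 0) one_pos
    | succ n ih => rw [hδ_succ]; exact lt_min ih (lt_min (hd0 (n+1)) (by positivity))
  have hδd : ∀ N, δ N ≤ d N := by
    intro N
    cases N with
    | zero => exact min_le_left _ _
    | succ n => rw [hδ_succ]; exact le_trans (min_le_right _ _) (min_le_left _ _)
  have hδanti : Antitone δ := by
    apply antitone_nat_of_succ_le
    intro n
    rw [hδ_succ]
    exact min_le_left _ _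
  have hδsmall : ∀ N : ℕ, δ N ≤ ((N:ℝ)+1)⁻¹ := by
    intro N
    cases N with
    | zero => rw [hδ_zero]; simpa using min_le_right (d 0) (1:ℝ)
    | succ n =>
      rw [hδ_succ]
      refine le_trans (min_le_right _ _) (le_trans (min_le_right _ _) ?_)
      push_cast
      apply le_of_eq
      ring_nf
  have hex : ∀ ε : ℝ, 0 < ε → ∃ n, δ n ≤ ε := by
    intro ε hε
    obtain ⟨n, hn⟩ := exists_nat_gt ε⁻¹
    refine ⟨n, (hδsmall n).trans ?_⟩
    have h2 : (0:ℝ) < (n:ℝ)+1 := by positivity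
    exact (inv_le_comm₀ h2 hε).mpr (le_trans hn.le (by linarith))
  -- the limit net
  set v : ℝ → E := fun ε => @dite E (∃ n, δ n ≤ ε) (Classical.dec _) (fun _ => u (c (sInf {n | δ n ≤ ε} - 1)) ε) (fun _ => 0)
    with hv_def
  -- key structural fact about v
  have hkey : ∀ ε : ℝ, 0 < ε → ∀ s : ℕ, ε < δ s →
      ∃ j : ℕ, s ≤ j ∧ ε < δ j ∧ v ε = u (c j) ε := by
    intro ε hε s hs
    have h : ∃ n, δ n ≤ ε := hex ε hε
    have hFspec : δ (sInf {n | δ n ≤ ε}) ≤ ε := Nat.sInf_mem h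
    have hF1 : 1 ≤ sInf {n | δ n ≤ ε} := by
      rcases Nat.eq_zero_or_pos (sInf {n | δ n ≤ ε}) with h0 | h1
      · rw [h0] at hFspec
        exact absurd hFspec (not_le.2 (lt_of_lt_of_le hs (hδanti (Nat.zero_le s))))
      · exact h1
    refine ⟨sInf {n | δ n ≤ ε} - 1, ?_, ?_, ?_⟩
    · by_contra hcon
      push_neg at hcon
      have hFle : sInf {n | δ n ≤ ε} ≤ s := by omega
      exact absurd hFspec (not_le.2 (lt_of_lt_of_le hs (hδanti hFle)))
    · exact not_le.1 (Nat.notMem_of_lt_sInf (show sInf {n | δ n ≤ ε} - 1 < sInf {n | δ n ≤ ε} by omega))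
    · simp only [hv_def]
      rw [dif_pos h]
  refine ⟨v, ?_, ?_⟩
  · -- moderateness of v
    intro i
    obtain ⟨M, hM⟩ := hu (c i) i
    refine ⟨M + 1, ?_⟩
    filter_upwards [hM, L_mem01, L_lt (hδpos i), L_lt (show (0:ℝ) < 1/2 by norm_num)]
      with ε hMε hε01 hεδ hε2
    obtain ⟨j, hij, hεj, hvε⟩ := hkey ε hε01.1 i hεδ
    have hQ := hdS j ε hε01.1 (lt_of_lt_of_le hεj (hδd j))
    have h1 : p i (u (c i) ε - u (c j) ε) ≤ ε ^ i := hQ i i j le_rfl hij le_rfl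
    have h2 : ε ^ i ≤ 1 := pow_le_one₀ hε01.1.le hε01.2.le
    have h3 : p i (u (c j) ε) ≤ p i (u (c i) ε) + p i (u (c i) ε - u (c j) ε) := by
      have h4 := map_sub_le_add (p i) (u (c i) ε) (u (c i) ε - u (c j) ε)
      rwa [sub_sub_cancel] at h4
    have hεinv : (2:ℝ) ≤ ε⁻¹ := by
      rw [show (2:ℝ) = (2⁻¹:ℝ)⁻¹ by norm_num]
      exact inv_anti₀ hε01.1 (by linarith)
    have hone : (1:ℝ) ≤ ε⁻¹ ^ M := one_le_pow₀ (by linarith)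
    calc p i (v ε) ≤ ε⁻¹ ^ M + 1 := by
          rw [hvε]; exact h3.trans (add_le_add hMε (h1.trans h2))
      _ ≤ ε⁻¹ ^ M + ε⁻¹ ^ M := by linarith
      _ = 2 * ε⁻¹ ^ M := by ring
      _ ≤ ε⁻¹ * ε⁻¹ ^ M := by
          apply mul_le_mul_of_nonneg_right hεinv
          positivity
      _ = ε⁻¹ ^ (M + 1) := by ring
  · -- convergence
    intro n m
    refine ⟨c (max n m + 1), fun k hk => ?_⟩
    filter_upwards [hc (max n m + 1) n (max n m + 1) (by omega) le_rfl k (c (max n m + 1)) hk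
        le_rfl, L_mem01, L_lt (hδpos (max n m + 1)), L_lt (show (0:ℝ) < 1/2 by norm_num)]
      with ε h1 hε01 hεδ hε2
    obtain ⟨j, htj, hεj, hvε⟩ := hkey ε hε01.1 (max n m + 1) hεδ
    have hQ := hdS j ε hε01.1 (lt_of_lt_of_le hεj (hδd j))
    have h2 : p n (u (c (max n m + 1)) ε - u (c j) ε) ≤ ε ^ (max n m + 1) :=
      hQ n (max n m + 1) j (by omega) htj le_rfl
    have h3 : p n (u k ε - v ε) ≤ ε ^ (max n m + 1) + ε ^ (max n m + 1) := by
      rw [hvε]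
      have h4 := map_add_le_add (p n) (u k ε - u (c (max n m + 1)) ε)
        (u (c (max n m + 1)) ε - u (c j) ε)
      rw [sub_add_sub_cancel] at h4
      exact h4.trans (add_le_add h1 h2)
    have h5 : ε ^ (max n m + 1) ≤ ε ^ (m + 1) :=
      pow_le_pow_of_le_one hε01.1.le hε01.2.le (by omega)
    have h6 : (0:ℝ) ≤ ε ^ m := pow_nonneg hε01.1.le m
    calc p n (u k ε - v ε) ≤ ε ^ (max n m + 1) + ε ^ (max n m + 1) := h3
      _ ≤ ε ^ (m+1) + ε ^ (m+1) := by linarith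
      _ = 2 * ε * ε ^ m := by ring
      _ ≤ 1 * ε ^ m := by nlinarith
      _ = ε ^ m := one_mul _
end
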